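/- 'Rough' values of affine-linear forms are rare. Let N ≥ 3, let Ψ = (ψ_1, …, ψ_t) : ℤ^d → ℤ^t be a system of affine-linear forms whose linear coefficients are bounded in absolute value by L, let K ⊆ [−N, N]^d be a convex body with Ψ(K) ⊆ [1, N]^t, and let C_1 > 1. Then Σ_{i=1}^t Σ_{n ∈ ℤ^d ∩ K} 1_{ψ_i(n) ∈ S_1} ≪_{L,d,t,C_1} N^d (log N)^{−C_1/2}. -/

import Mathlib

open MeasureTheory Finset Filter
open scoped Classical BigOperators

noncomputable section

namespace DivisorCorr

/-- Value of the `i`-th affine-linear form (with linear coefficients `A` and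
constant terms `b`) at an integer point `n`. -/
def psiZ {d t : ℕ} (A : Fin t → Fin d → ℤ) (b : Fin t → ℤ) (i : Fin t) (n : Fin d → ℤ) : ℤ :=
  ∑ j, A i j * n j + b i

/-- Value of the `i`-th affine-linear form at a real point `x`. -/
def psiR {d t : ℕ} (A : Fin t → Fin d → ℤ) (b : Fin t → ℤ) (i : Fin t) (x : Fin d → ℝ) : ℝ :=
  ∑ j, (A i j : ℝ) * x j + (b i : ℝ)

/-- Non-degeneracy conditions for a system of affine-linear forms: no form is constant,
no restriction of the system to a single variable is constant, and no two forms are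
rational multiples of each other. -/
def IsSystem {d t : ℕ} (A : Fin t → Fin d → ℤ) (b : Fin t → ℤ) : Prop :=
  (∀ i, ∃ j, A i j ≠ 0) ∧ (∀ j, ∃ i, A i j ≠ 0) ∧
    ∀ i j : Fin t, i ≠ j →
      ¬∃ q r : ℤ, q ≠ 0 ∧ r ≠ 0 ∧ (∀ k, q * A i k = r * A j k) ∧ q * b i = r * b j

/-- All linear coefficients are bounded in absolute value by `L`. -/
def CoeffBound {d t : ℕ} (A : Fin t → Fin d → ℤ) (L : ℕ) : Prop :=
  ∀ i j, |A i j| ≤ (L : ℤ)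

/-- Any two distinct linear parts are linearly independent (over ℚ, equivalently over ℤ). -/
def PairwiseIndep {d t : ℕ} (A : Fin t → Fin d → ℤ) : Prop :=
  ∀ i j : Fin t, i ≠ j → ∀ q r : ℤ, (∀ k, q * A i k + r * A j k = 0) → q = 0 ∧ r = 0

/-- Local divisor density `α(d₁,…,d_t)`. -/
def alphaD {d t : ℕ} (A : Fin t → Fin d → ℤ) (b : Fin t → ℤ) (D : Fin t → ℕ) : ℝ :=
  (((Fintype.piFinset fun _ : Fin d => Finset.range ((univ : Finset (Fin t)).lcm D)).filter
      fun n => ∀ i, (D i : ℤ) ∣ psiZ A b i fun j => (n j : ℤ)).card : ℝ) /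
    ((((univ : Finset (Fin t)).lcm D : ℕ) : ℝ)) ^ d

/-- Local factor `β_p`. -/
def betaP {d t : ℕ} (A : Fin t → Fin d → ℤ) (b : Fin t → ℤ) (p : ℕ) : ℝ :=
  (1 - (p : ℝ)⁻¹) ^ t * ∑' a : Fin t → ℕ, alphaD A b fun i => p ^ a i

/-- The divisor function of an integer. -/
def tauZ (n : ℤ) : ℕ := n.natAbs.divisors.card

/-- The normalised divisor function `τ̃(n) = (log N)⁻¹ Σ_{d ∣ n} 1`. -/
def tauTilde (N : ℕ) (n : ℤ) : ℝ := (Real.log N)⁻¹ * (tauZ n : ℝ)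

/-- The truncated normalised divisor function
`τ̃_γ(n) = (γ log N)⁻¹ Σ_{d ∣ n, d ≤ N^γ} 1`. -/
def tauTildeG (N : ℕ) (γ : ℝ) (n : ℤ) : ℝ :=
  (γ * Real.log N)⁻¹ * (((n.natAbs.divisors.filter (fun e : ℕ => (e : ℝ) ≤ (N : ℝ) ^ γ)).card : ℕ) : ℝ)

/-- The integer points of `K` (assumed to lie in `[-N,N]^d`). -/
def pts (d N : ℕ) (K : Set (Fin d → ℝ)) : Finset (Fin d → ℤ) :=
  (Fintype.piFinset fun _ : Fin d => Finset.Icc (-(N : ℤ)) (N : ℤ)).filter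
    fun n => (fun j => (n j : ℝ)) ∈ K

/-- The integer points of `K` (assumed to lie in the box `∏_j [lo j, hi j]`). -/
def ptsBox {d : ℕ} (lo hi : Fin d → ℤ) (K : Set (Fin d → ℝ)) : Finset (Fin d → ℤ) :=
  (Fintype.piFinset fun j : Fin d => Finset.Icc (lo j) (hi j)).filter
    fun n => (fun j => (n j : ℝ)) ∈ K

/-- `K ⊆ [-N,N]^d`. -/
def InBox (d N : ℕ) (K : Set (Fin d → ℝ)) : Prop :=
  ∀ x ∈ K, ∀ j, x j ∈ Set.Icc (-(N : ℝ)) (N : ℝ)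

/-- `Ψ(K) ⊆ [1,N]^t`. -/
def MapsIn {d t : ℕ} (A : Fin t → Fin d → ℤ) (b : Fin t → ℤ) (N : ℕ)
    (K : Set (Fin d → ℝ)) : Prop :=
  ∀ x ∈ K, ∀ i, psiR A b i x ∈ Set.Icc (1 : ℝ) (N : ℝ)

/-- Two linear parts are linearly dependent modulo `p`. -/
def AffRelMod {d : ℕ} (p : ℕ) (u v : Fin d → ℤ) : Prop :=
  ∃ q r : ℤ, (¬(p : ℤ) ∣ q ∨ ¬(p : ℤ) ∣ r) ∧ ∀ k, (p : ℤ) ∣ (q * u k + r * v k)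

/-- `p` is an exceptional prime for the system with linear coefficients `A`. -/
def Exceptional {d t : ℕ} (A : Fin t → Fin d → ℤ) (p : ℕ) : Prop :=
  ∃ i j : Fin t, i ≠ j ∧ AffRelMod p (A i) (A j)

/-- `S₁`: integers divisible by a proper prime power `p^a > (log N)^{C₁}`. -/
def S1set (N : ℕ) (C₁ : ℝ) : Set ℤ :=
  {m | ∃ p a : ℕ, p.Prime ∧ 2 ≤ a ∧ Real.log N ^ C₁ < (p : ℝ) ^ a ∧ (p : ℤ) ^ a ∣ m}

/-- The `X`-smooth part `∏_{p^a ∥ n, p ≤ X} p^a` of `n`. -/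
def smoothPart (n : ℕ) (X : ℝ) : ℕ :=
  ∏ p ∈ (n.primeFactors.filter (fun p : ℕ => (p : ℝ) ≤ X) : Finset ℕ), p ^ n.factorization p

/-- `S₂`: positive "smooth" integers `m` with
`∏_{p^a ∥ m, p ≤ N^{1/(log log N)³}} p^a ≥ N^{γ / log log N}`. -/
def S2set (N : ℕ) (γ : ℝ) : Set ℤ :=
  {m | 0 < m ∧ (N : ℝ) ^ (γ / Real.log (Real.log N)) ≤
      (smoothPart m.natAbs ((N : ℝ) ^ ((Real.log (Real.log N)) ^ 3)⁻¹) : ℝ)}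

/-- `m₀(i,s) = ⌈γ s (i + 3 - log₂ s)/100⌉`. -/
def mSmall (γ : ℝ) (s i : ℕ) : ℕ := ⌈γ * s * ((i : ℝ) + 3 - Real.logb 2 s) / 100⌉₊

/-- Membership in `U(i,s)`: products of `m₀(i,s)` distinct primes from
`[N^{1/2^{i+1}}, N^{1/2^i}]`. -/
def inU (N : ℕ) (γ : ℝ) (s i : ℕ) (u : ℕ) : Prop :=
  Squarefree u ∧ u.primeFactors.card = mSmall γ s i ∧
    ∀ p ∈ u.primeFactors,
      (N : ℝ) ^ (((2 : ℝ) ^ (i + 1))⁻¹) ≤ (p : ℝ) ∧ (p : ℝ) ≤ (N : ℝ) ^ (((2 : ℝ) ^ i)⁻¹)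

/-- `X(i,s)`: positive integers `n ≤ N` divisible by at least `m₀(i,s)` distinct primes
from `[N^{1/2^{i+1}}, N^{1/2^i}]`. -/
def clusterSet (N : ℕ) (γ : ℝ) (s i : ℕ) : Finset ℕ :=
  (Finset.Icc 1 N).filter fun n =>
    mSmall γ s i ≤ (n.primeFactors.filter fun p =>
      (N : ℝ) ^ (((2 : ℝ) ^ (i + 1))⁻¹) ≤ (p : ℝ) ∧ (p : ℝ) ≤ (N : ℝ) ^ (((2 : ℝ) ^ i)⁻¹)).card

/-- The triple sum `Σ_{s=2g+1}^{(log log N)³} Σ_{log₂ s - 2 ≤ i ≤ 6 log log log N}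
Σ_{u ∈ U(i,s)} 2^s 1_{u ∣ n} tg(n)` appearing in the majorants. -/
def nuTail (N : ℕ) (γ : ℝ) (g : ℕ) (tg : ℤ → ℝ) (n : ℤ) : ℝ :=
  ∑ s ∈ Finset.Icc (2 * g + 1) ⌊(Real.log (Real.log N)) ^ 3⌋₊,
    ∑ i ∈ Finset.range (⌊6 * Real.log (Real.log (Real.log N))⌋₊ + 1),
      if Real.logb 2 (s : ℝ) - 2 ≤ (i : ℝ) then
        (2 : ℝ) ^ s * (((n.natAbs.divisors.filter (inU N γ s i)).card : ℕ) : ℝ) * tg n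
      else 0

/-- The majorant `ν₀` for the normalised divisor function, with `γ = 1/g`. -/
def nu0 (N g : ℕ) (C₁ : ℝ) (n : ℤ) : ℝ :=
  (2 : ℝ) ^ (2 * g) * tauTildeG N (g : ℝ)⁻¹ n +
    nuTail N (g : ℝ)⁻¹ g (tauTildeG N (g : ℝ)⁻¹) n +
    if n ∈ S1set N C₁ ∪ S2set N (g : ℝ)⁻¹ then tauTilde N n else 0

/-- `w(N) = (1/2) log log N`. -/
def wN (N : ℕ) : ℝ := Real.log (Real.log N) / 2

/-- Primes `p < w(N)`. -/
def smallPrimes (N : ℕ) : Finset ℕ :=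
  (Finset.range (⌈wN N⌉₊ + 1)).filter fun p : ℕ => p.Prime ∧ (p : ℝ) < wN N

/-- Primes `p ≤ w(N)`. -/
def smallPrimesLe (N : ℕ) : Finset ℕ :=
  (Finset.range (⌈wN N⌉₊ + 1)).filter fun p : ℕ => p.Prime ∧ (p : ℝ) ≤ wN N

/-- `W = ∏_{p < w(N)} p`. -/
def Wp (N : ℕ) : ℕ := ∏ p ∈ smallPrimes N, p

/-- `W̃ = ∏_{p ≤ w(N)} p^{⌊C₁ log_p log N⌋}`. -/
def Wt (N : ℕ) (C₁ : ℝ) : ℕ :=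
  ∏ p ∈ smallPrimesLe N, p ^ ⌊C₁ * (Real.log (Real.log N) / Real.log p)⌋₊

/-- `ϖ(n)`: the `w(N)`-smooth part of `n`. -/
def varpi (N : ℕ) (n : ℕ) : ℕ :=
  ∏ p ∈ (n.primeFactors.filter (fun p : ℕ => (p : ℝ) ≤ wN N) : Finset ℕ), p ^ n.factorization p

/-- The `W`-tricked normalised divisor function
`τ̃'(n) = (W/φ(W)) (log N)⁻¹ Σ_{d ∣ n, (d,W)=1} 1`. -/
def tauW (N : ℕ) (n : ℤ) : ℝ :=
  (Wp N : ℝ) / ((Wp N).totient : ℝ) * (Real.log N)⁻¹ *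
    (((n.natAbs.divisors.filter (fun e => Nat.Coprime e (Wp N))).card : ℕ) : ℝ)

/-- The truncated `W`-tricked normalised divisor function
`τ̃'_γ(n) = (W/φ(W)) (γ log N)⁻¹ Σ_{d ∣ n, d ≤ N^γ, (d,W)=1} 1`. -/
def tauWG (N : ℕ) (γ : ℝ) (n : ℤ) : ℝ :=
  (Wp N : ℝ) / ((Wp N).totient : ℝ) * (γ * Real.log N)⁻¹ *
    (((n.natAbs.divisors.filter (fun e : ℕ =>
        (e : ℝ) ≤ (N : ℝ) ^ γ ∧ Nat.Coprime e (Wp N))).card : ℕ) : ℝ)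

/-- The truncated `W`-tricked majorant `ν₀'`, with `γ = 1/g`. -/
def nu0' (N g : ℕ) (n : ℤ) : ℝ :=
  (2 : ℝ) ^ (2 * g) * tauWG N (g : ℝ)⁻¹ n + nuTail N (g : ℝ)⁻¹ g (tauWG N (g : ℝ)⁻¹) n

lemma card_mult_le (N : ℕ) (q : ℤ) (hq : 0 < q) :
    (((Finset.Icc (1:ℤ) (N:ℤ)).filter fun m => q ∣ m).card : ℝ) ≤ (N : ℝ) / (q : ℝ) := by
  have hq' : (0:ℝ) < (q:ℝ) := by exact_mod_cast hq
  have hcard : ((Finset.Icc (1:ℤ) (N:ℤ)).filter fun m => q ∣ m).card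
      ≤ (Finset.Icc (1:ℤ) ((N:ℤ)/q)).card := by
    apply Finset.card_le_card_of_injOn (fun m => m / q)
    · intro m hm
      simp only [Finset.coe_filter, Finset.mem_coe, Set.mem_setOf_eq, Finset.mem_filter, Finset.mem_Icc] at hm ⊢
      obtain ⟨⟨h1, h2⟩, hdvd⟩ := hm
      refine ⟨(Int.le_ediv_iff_mul_le hq).2 (by simpa using Int.le_of_dvd (by linarith) hdvd),
        Int.ediv_le_ediv hq h2⟩
    · intro a ha b hb hab
      simp only [Finset.coe_filter, Set.mem_setOf_eq] at ha hb
      have ha' := Int.ediv_mul_cancel ha.2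
      have hb' := Int.ediv_mul_cancel hb.2
      simp only at hab
      rw [← ha', ← hb', hab]
  have h0 : (0:ℤ) ≤ (N:ℤ)/q := Int.ediv_nonneg (by positivity) hq.le
  have h2 : ((Finset.Icc (1:ℤ) ((N:ℤ)/q)).card : ℝ) ≤ (N:ℝ)/(q:ℝ) := by
    rw [Int.card_Icc]
    have : ((N:ℤ)/q + 1 - 1) = (N:ℤ)/q := by ring
    rw [this]
    rw [le_div_iff₀ hq']
    have h3 : ((N:ℤ)/q) * q ≤ (N:ℤ) := Int.ediv_mul_le _ hq.ne'
    have h4 : ((((N:ℤ)/q).toNat : ℤ) : ℝ) * (q:ℝ) ≤ ((N:ℤ):ℝ) := by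
      rw [Int.toNat_of_nonneg h0]
      exact_mod_cast h3
    exact_mod_cast h4
  calc (((Finset.Icc (1:ℤ) (N:ℤ)).filter fun m => q ∣ m).card : ℝ)
      ≤ ((Finset.Icc (1:ℤ) ((N:ℤ)/q)).card : ℝ) := by exact_mod_cast hcard
    _ ≤ _ := h2

lemma S1_count (C₁ : ℝ) (hC₁ : 1 < C₁) (N : ℕ) (hN : 3 ≤ N) :
    (((Finset.Icc (1:ℤ) (N:ℤ)).filter fun m => m ∈ S1set N C₁).card : ℝ)
      ≤ 4 * (N:ℝ) * Real.log N ^ (-(C₁/2)) := by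
  have hN0 : (0:ℝ) < N := by positivity
  have hlog : 1 < Real.log N := by
    rw [Real.lt_log_iff_exp_lt hN0]
    calc Real.exp 1 < 2.7182818286 := Real.exp_one_lt_d9
      _ ≤ (N:ℝ) := by
        have : (3:ℝ) ≤ (N:ℝ) := by exact_mod_cast hN
        linarith
  have hlog0 : 0 < Real.log N := by linarith
  set X : ℝ := Real.log N ^ C₁ with hXdef
  set Y : ℝ := Real.log N ^ (C₁/2) with hYdef
  have hX1 : 1 < X := Real.one_lt_rpow_iff_of_pos hlog0 |>.2 (Or.inl ⟨hlog, by linarith⟩)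
  have hY1 : 1 < Y := Real.one_lt_rpow_iff_of_pos hlog0 |>.2 (Or.inl ⟨hlog, by linarith⟩)
  have hYY : Y * Y = X := by
    rw [hYdef, hXdef, ← Real.rpow_add hlog0]
    ring_nf
  have hgoal : Real.log N ^ (-(C₁/2)) = Y⁻¹ := Real.rpow_neg hlog0.le _
  rw [hgoal]
  -- exponent function
  have hEx : ∀ p : ℕ, p.Prime → ∃ b : ℕ, 2 ≤ b ∧ X < (p:ℝ)^b := by
    intro p hp
    have hp1 : (1:ℝ) < (p:ℝ) := by exact_mod_cast hp.one_lt
    obtain ⟨c, hc⟩ := pow_unbounded_of_one_lt X hp1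
    exact ⟨max 2 c, le_max_left _ _,
      hc.trans_le (pow_le_pow_right₀ hp1.le (le_max_right _ _))⟩
  classical
  set E : ℕ → ℕ := fun p =>
    if h : ∃ b : ℕ, 2 ≤ b ∧ X < (p:ℝ)^b then Nat.find h else 2 with hEdef
  have hEeq : ∀ p : ℕ, ∀ hp : p.Prime, E p = Nat.find (hEx p hp) := by
    intro p hp
    show dite _ _ _ = _
    rw [dif_pos (hEx p hp)]
  have hE2 : ∀ p : ℕ, p.Prime → 2 ≤ E p := by
    intro p hp
    rw [hEeq p hp]
    exact (Nat.find_spec (hEx p hp)).1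
  have hEX : ∀ p : ℕ, p.Prime → X < (p:ℝ)^(E p) := by
    intro p hp
    rw [hEeq p hp]
    exact (Nat.find_spec (hEx p hp)).2
  have hEmin : ∀ p : ℕ, p.Prime → ∀ a : ℕ, 2 ≤ a → X < (p:ℝ)^a → E p ≤ a := by
    intro p hp a ha hXa
    rw [hEeq p hp]
    exact Nat.find_min' _ ⟨ha, hXa⟩
  set P : Finset ℕ := (Finset.range (N+1)).filter Nat.Prime with hPdef
  -- covering
  have hcover : ((Finset.Icc (1:ℤ) (N:ℤ)).filter fun m => m ∈ S1set N C₁)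
      ⊆ P.biUnion (fun p => (Finset.Icc (1:ℤ) (N:ℤ)).filter fun m => ((p:ℤ))^(E p) ∣ m) := by
    intro m hm
    simp only [Finset.mem_filter, Finset.mem_Icc] at hm
    obtain ⟨⟨h1, h2⟩, p, a, hp, ha2, haX, hdvd⟩ := hm
    have hpa_le : ((p:ℤ))^a ≤ (N:ℤ) :=
      le_trans (Int.le_of_dvd (by linarith) hdvd) h2
    have hp_le : p ≤ N := by
      have h2p : (p:ℤ) ≤ (p:ℤ)^a := by
        calc (p:ℤ) = (p:ℤ)^1 := (pow_one _).symm
        _ ≤ (p:ℤ)^a := pow_le_pow_right₀ (by exact_mod_cast hp.one_lt.le) (by omega)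
      exact_mod_cast le_trans h2p hpa_le
    refine Finset.mem_biUnion.2 ⟨p, ?_, ?_⟩
    · simp only [hPdef, Finset.mem_filter, Finset.mem_range]
      exact ⟨by omega, hp⟩
    · simp only [Finset.mem_filter, Finset.mem_Icc]
      exact ⟨⟨h1, h2⟩, dvd_trans (pow_dvd_pow _ (hEmin p hp a ha2 haX)) hdvd⟩
  have hstep1 : (((Finset.Icc (1:ℤ) (N:ℤ)).filter fun m => m ∈ S1set N C₁).card : ℝ)
      ≤ ∑ p ∈ P, (((Finset.Icc (1:ℤ) (N:ℤ)).filter fun m => ((p:ℤ))^(E p) ∣ m).card : ℝ) := by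
    have := le_trans (Finset.card_le_card hcover) (Finset.card_biUnion_le)
    exact_mod_cast this
  set B : ℕ → ℝ := fun p => if (p:ℝ) ≤ Y then (N:ℝ)/X else (N:ℝ)/(p:ℝ)^2 with hBdef
  have hperp : ∀ p ∈ P, (((Finset.Icc (1:ℤ) (N:ℤ)).filter fun m => ((p:ℤ))^(E p) ∣ m).card : ℝ)
      ≤ B p := by
    intro p hpP
    have hp : p.Prime := (Finset.mem_filter.1 hpP).2
    have hp0 : (0:ℝ) < (p:ℝ) := by exact_mod_cast hp.pos
    have hq : (0:ℤ) < (p:ℤ)^(E p) := pow_pos (by exact_mod_cast hp.pos) _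
    have h1 := card_mult_le N _ hq
    have hcast : (((p:ℤ)^(E p) : ℤ) : ℝ) = (p:ℝ)^(E p) := by push_cast; ring
    rw [hcast] at h1
    refine h1.trans ?_
    rw [hBdef]
    by_cases hpY : (p:ℝ) ≤ Y
    · simp only [if_pos hpY]
      apply div_le_div_of_nonneg_left (by positivity) (by linarith) (hEX p hp).le
    · simp only [if_neg hpY]
      apply div_le_div_of_nonneg_left (by positivity) (by positivity)
      exact pow_le_pow_right₀ (by exact_mod_cast hp.one_lt.le) (hE2 p hp)
  have hstep2 : ∑ p ∈ P, (((Finset.Icc (1:ℤ) (N:ℤ)).filter fun m => ((p:ℤ))^(E p) ∣ m).card : ℝ)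
      ≤ ∑ p ∈ P, B p := Finset.sum_le_sum hperp
  have hsplit : ∑ p ∈ P.filter (fun p : ℕ => (p:ℝ) ≤ Y), B p
      + ∑ p ∈ P.filter (fun p : ℕ => ¬(p:ℝ) ≤ Y), B p = ∑ p ∈ P, B p :=
    Finset.sum_filter_add_sum_filter_not P _ B
  set k := ⌊Y⌋₊ with hkdef
  have hY0 : (0:ℝ) < Y := by linarith
  have hk1 : 1 ≤ k := Nat.le_floor (by exact_mod_cast hY1.le)
  have hk0 : (0:ℝ) < (k:ℝ) := by exact_mod_cast hk1
  have hkY : (k:ℝ) ≤ Y := Nat.floor_le hY0.le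
  have hY2k : Y ≤ 2*(k:ℝ) := by
    have h1 := Nat.lt_floor_add_one Y
    have h2 : (1:ℝ) ≤ (k:ℝ) := by exact_mod_cast hk1
    rw [← hkdef] at h1
    linarith
  have hsum1 : ∑ p ∈ P.filter (fun p : ℕ => (p:ℝ) ≤ Y), B p ≤ (N:ℝ)/Y := by
    have heq : ∀ p ∈ P.filter (fun p : ℕ => (p:ℝ) ≤ Y), B p = (N:ℝ)/X := by
      intro p hp
      rw [hBdef]
      simp only [if_pos (Finset.mem_filter.1 hp).2]
    rw [Finset.sum_congr rfl heq, Finset.sum_const, nsmul_eq_mul]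
    have hsub : P.filter (fun p : ℕ => (p:ℝ) ≤ Y) ⊆ Finset.Icc 1 k := by
      intro p hp
      simp only [hPdef, Finset.mem_filter, Finset.mem_range, Finset.mem_Icc] at hp ⊢
      exact ⟨hp.1.2.pos, Nat.le_floor hp.2⟩
    have hcard : (((P.filter (fun p : ℕ => (p:ℝ) ≤ Y)).card : ℕ) : ℝ) ≤ (k:ℝ) := by
      have := (Finset.card_le_card hsub).trans_eq (by rw [Nat.card_Icc])
      exact_mod_cast this
    have hNX : (0:ℝ) ≤ (N:ℝ)/X := by positivity
    have hYNX : Y * ((N:ℝ)/X) = (N:ℝ)/Y := by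
      rw [← hYY]
      field_simp
    calc (((P.filter (fun p : ℕ => (p:ℝ) ≤ Y)).card : ℕ) : ℝ) * ((N:ℝ)/X)
        ≤ Y * ((N:ℝ)/X) := mul_le_mul_of_nonneg_right (hcard.trans hkY) hNX
      _ = (N:ℝ)/Y := hYNX
  have hsum2 : ∑ p ∈ P.filter (fun p : ℕ => ¬(p:ℝ) ≤ Y), B p ≤ 2*(N:ℝ)/Y := by
    have heq : ∀ p ∈ P.filter (fun p : ℕ => ¬(p:ℝ) ≤ Y), B p = (N:ℝ) * (((p:ℝ))^2)⁻¹ := by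
      intro p hp
      rw [hBdef]
      simp only [if_neg (Finset.mem_filter.1 hp).2]
      rw [div_eq_mul_inv]
    rw [Finset.sum_congr rfl heq, ← Finset.mul_sum]
    have hsub : P.filter (fun p : ℕ => ¬(p:ℝ) ≤ Y) ⊆ Finset.Ioc k (max k N) := by
      intro p hp
      simp only [hPdef, Finset.mem_filter, Finset.mem_range] at hp
      have hYp : Y < (p:ℝ) := lt_of_not_ge hp.2
      have hkp : (k:ℝ) < (p:ℝ) := lt_of_le_of_lt hkY hYp
      simp only [Finset.mem_Ioc]
      exact ⟨by exact_mod_cast hkp, le_max_of_le_right (by omega)⟩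
    have hmono : ∑ p ∈ P.filter (fun p : ℕ => ¬(p:ℝ) ≤ Y), (((p:ℝ))^2)⁻¹
        ≤ ∑ i ∈ Finset.Ioc k (max k N), (((i:ℝ))^2)⁻¹ :=
      Finset.sum_le_sum_of_subset_of_nonneg hsub (by intros; positivity)
    have hioc := sum_Ioc_inv_sq_le_sub (α := ℝ) (show k ≠ 0 by omega) (le_max_left k N)
    have hmax0 : (0:ℝ) ≤ ((max k N : ℕ):ℝ)⁻¹ := by positivity
    have htot : ∑ p ∈ P.filter (fun p : ℕ => ¬(p:ℝ) ≤ Y), (((p:ℝ))^2)⁻¹ ≤ (k:ℝ)⁻¹ :=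
      hmono.trans (hioc.trans (by linarith))
    have hkinv : (k:ℝ)⁻¹ ≤ 2/Y := by
      rw [← one_div, div_le_div_iff₀ hk0 hY0]
      linarith
    calc (N:ℝ) * ∑ p ∈ P.filter (fun p : ℕ => ¬(p:ℝ) ≤ Y), (((p:ℝ))^2)⁻¹
        ≤ (N:ℝ) * (2/Y) := mul_le_mul_of_nonneg_left (htot.trans hkinv) (by positivity)
      _ = 2*(N:ℝ)/Y := by ring
  have hNY : (0:ℝ) ≤ (N:ℝ)/Y := by positivity
  calc (((Finset.Icc (1:ℤ) (N:ℤ)).filter fun m => m ∈ S1set N C₁).card : ℝ)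
      ≤ ∑ p ∈ P, B p := hstep1.trans hstep2
    _ = ∑ p ∈ P.filter (fun p : ℕ => (p:ℝ) ≤ Y), B p
        + ∑ p ∈ P.filter (fun p : ℕ => ¬(p:ℝ) ≤ Y), B p := hsplit.symm
    _ ≤ (N:ℝ)/Y + 2*(N:ℝ)/Y := add_le_add hsum1 hsum2
    _ ≤ 4 * (N:ℝ) * Y⁻¹ := by
        rw [div_eq_mul_inv, div_eq_mul_inv] at *
        nlinarith [hNY]


/-- **"Rough" values of affine-linear forms are rare.**
`Σ_{i ≤ t} Σ_{n ∈ ℤ^d ∩ K} 1_{ψ_i(n) ∈ S₁} ≪_{L,d,t,C₁} N^d (log N)^{-C₁/2}`. -/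
theorem rough_values_rare (d t L : ℕ) (hd : 0 < d) (ht : 0 < t) (hL : 0 < L)
    (C₁ : ℝ) (hC₁ : 1 < C₁) :
    ∃ C : ℝ, 0 < C ∧ ∀ N : ℕ, 3 ≤ N →
      ∀ (A : Fin t → Fin d → ℤ) (b : Fin t → ℤ), IsSystem A b → CoeffBound A L →
      ∀ K : Set (Fin d → ℝ), Convex ℝ K → InBox d N K → MapsIn A b N K →
        (∑ i : Fin t, ∑ n ∈ pts d N K,
            if psiZ A b i n ∈ S1set N C₁ then (1 : ℝ) else 0) ≤
          C * (N : ℝ) ^ d * Real.log N ^ (-(C₁ / 2)) := by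
  have ht0 : (0:ℝ) < (t:ℝ) := by exact_mod_cast ht
  refine ⟨4 * (t:ℝ) * 3^(d-1), by positivity, ?_⟩
  intro N hN A b hSys hCB K hconv hbox hmaps
  have hN0 : (0:ℝ) < N := by positivity
  have hlogpow0 : (0:ℝ) ≤ Real.log N ^ (-(C₁/2)) := by
    apply Real.rpow_nonneg
    apply Real.log_nonneg
    exact_mod_cast (by omega : 1 ≤ N)
  have hinner : ∀ i : Fin t,
      (∑ n ∈ pts d N K, if psiZ A b i n ∈ S1set N C₁ then (1:ℝ) else 0)
      ≤ 4 * 3^(d-1) * (N:ℝ)^d * Real.log N ^ (-(C₁/2)) := by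
    intro i
    obtain ⟨j, hj⟩ := hSys.1 i
    rw [Finset.sum_boole]
    set S := (Finset.Icc (1:ℤ) (N:ℤ)).filter (fun m => m ∈ S1set N C₁) with hSdef
    set T := Fintype.piFinset (fun k : Fin d =>
      if k = j then ({0} : Finset ℤ) else Finset.Icc (-(N:ℤ)) (N:ℤ)) with hTdef
    have hcard1 : ((pts d N K).filter (fun n => psiZ A b i n ∈ S1set N C₁)).card
        ≤ (S ×ˢ T).card := by
      apply Finset.card_le_card_of_injOn (fun n => (psiZ A b i n, Function.update n j 0))
      · intro n hn
        simp only [Finset.coe_filter, Finset.mem_coe, Set.mem_setOf_eq, Finset.mem_filter] at hn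
        obtain ⟨hnpts, hnS1⟩ := hn
        rw [pts, Finset.mem_filter] at hnpts
        have hnK : (fun j => (n j : ℝ)) ∈ K := hnpts.2
        have hnbox := hnpts.1
        rw [Fintype.mem_piFinset] at hnbox
        have hpsi := hmaps _ hnK i
        have hcast : psiR A b i (fun j => (n j : ℝ)) = ((psiZ A b i n : ℤ) : ℝ) := by
          unfold psiR psiZ; push_cast; ring
        rw [hcast, Set.mem_Icc] at hpsi
        rw [Finset.mem_coe, Finset.mem_product]
        constructor
        · rw [hSdef, Finset.mem_filter, Finset.mem_Icc]
          exact ⟨⟨by exact_mod_cast hpsi.1, by exact_mod_cast hpsi.2⟩, hnS1⟩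
        · rw [hTdef, Fintype.mem_piFinset]
          intro k
          by_cases hk : k = j
          · subst hk; simp
          · simp only [if_neg hk, Function.update_of_ne hk]
            have := hnbox k
            simpa using this
      · intro n hn n' hn' heq
        simp only [Prod.mk.injEq] at heq
        obtain ⟨h1, h2⟩ := heq
        have hne : ∀ k, k ≠ j → n k = n' k := by
          intro k hk
          have := congrFun h2 k
          rwa [Function.update_of_ne hk, Function.update_of_ne hk] at this
        have hsum : ∑ k, A i k * n k = ∑ k, A i k * n' k := by
          have h1' : psiZ A b i n = psiZ A b i n' := h1
          unfold psiZ at h1'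
          linarith
        have hsplit : ∀ m : Fin d → ℤ, ∑ k, A i k * m k
            = A i j * m j + ∑ k ∈ Finset.univ.erase j, A i k * m k := by
          intro m
          exact (Finset.add_sum_erase _ _ (Finset.mem_univ j)).symm
        rw [hsplit n, hsplit n'] at hsum
        have herase : ∑ k ∈ Finset.univ.erase j, A i k * n k
            = ∑ k ∈ Finset.univ.erase j, A i k * n' k := by
          refine Finset.sum_congr rfl fun k hk => ?_
          rw [hne k (Finset.ne_of_mem_erase hk)]
        rw [herase] at hsum
        have hj' : n j = n' j := mul_left_cancel₀ hj (by linarith)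
        funext k
        by_cases hk : k = j
        · subst hk; exact hj'
        · exact hne k hk
    have hTcard : T.card = (2*N+1)^(d-1) := by
      rw [hTdef, Fintype.card_piFinset]
      rw [← Finset.mul_prod_erase Finset.univ _ (Finset.mem_univ j)]
      simp only [if_pos rfl, Finset.card_singleton, one_mul]
      have hc : ∀ k ∈ Finset.univ.erase j,
          (if k = j then ({0}:Finset ℤ) else Finset.Icc (-(N:ℤ)) (N:ℤ)).card = 2*N+1 := by
        intro k hk
        rw [if_neg (Finset.ne_of_mem_erase hk), Int.card_Icc]
        omega
      rw [Finset.prod_congr rfl hc, Finset.prod_const,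
        Finset.card_erase_of_mem (Finset.mem_univ j), Finset.card_univ, Fintype.card_fin]
      simp
    have hScard : ((S.card : ℕ) : ℝ) ≤ 4 * (N:ℝ) * Real.log N ^ (-(C₁/2)) :=
      S1_count C₁ hC₁ N hN
    have hprod : (((S ×ˢ T).card : ℕ) : ℝ) = ((S.card : ℕ) : ℝ) * ((2*(N:ℝ)+1))^(d-1) := by
      rw [Finset.card_product, hTcard]
      push_cast
      ring
    have h2N : (2*(N:ℝ)+1) ≤ 3*(N:ℝ) := by
      have : (3:ℝ) ≤ (N:ℝ) := by exact_mod_cast hN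
      linarith
    calc ((((pts d N K).filter (fun n => psiZ A b i n ∈ S1set N C₁)).card : ℕ) : ℝ)
        ≤ (((S ×ˢ T).card : ℕ) : ℝ) := by exact_mod_cast hcard1
      _ = ((S.card : ℕ) : ℝ) * ((2*(N:ℝ)+1))^(d-1) := hprod
      _ ≤ (4 * (N:ℝ) * Real.log N ^ (-(C₁/2))) * (3*(N:ℝ))^(d-1) := by
          apply mul_le_mul hScard (pow_le_pow_left₀ (by linarith) h2N _)
            (by positivity) (by positivity)
      _ = 4 * 3^(d-1) * (N:ℝ)^d * Real.log N ^ (-(C₁/2)) := by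
          rw [mul_pow, show (N:ℝ)^d = (N:ℝ)^(d-1) * (N:ℝ) by
            rw [← pow_succ]; congr 1; omega]
          ring
  calc (∑ i : Fin t, ∑ n ∈ pts d N K,
          if psiZ A b i n ∈ S1set N C₁ then (1 : ℝ) else 0)
      ≤ ∑ _i : Fin t, 4 * 3^(d-1) * (N:ℝ)^d * Real.log N ^ (-(C₁/2)) :=
        Finset.sum_le_sum fun i _ => hinner i
    _ = (t:ℝ) * (4 * 3^(d-1) * (N:ℝ)^d * Real.log N ^ (-(C₁/2))) := by
        rw [Finset.sum_const, Finset.card_univ, Fintype.card_fin, nsmul_eq_mul]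
    _ = 4 * (t:ℝ) * 3^(d-1) * (N:ℝ)^d * Real.log N ^ (-(C₁/2)) := by ring

end DivisorCorr
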